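/- Let 𝒮 = (S, →, s°) be a finite LTS and let ℬ_min be a stable partition of S such that every stable partition of S refines ℬ_min. Then the quotient LTS 𝒮_min of ℬ_min is branching bisimilar to 𝒮, i.e., the initial state s° of 𝒮 and the initial block B* of 𝒮_min are related by a branching bisimulation relation on the disjoint union of the two systems. -/

import Mathlib

/-- Transition relation of a labeled transition system over actions `Option A`,
where `none` is the silent action τ. -/
abbrev LTSRel (S A : Type) := S → Option A → S → Prop

/-- `s ⇒ s'`: a finite (possibly empty) sequence of τ-transitions. -/
def TauStar {S A : Type} (Tr : LTSRel S A) : S → S → Prop :=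
  Relation.ReflTransGen (fun s t => Tr s none t)

/-- `t̂ →(α) t'`: either `t̂ →α t'`, or `α = τ` and `t̂ = t'`. -/
def TransOpt {S A : Type} (Tr : LTSRel S A) (s : S) (α : Option A) (t : S) : Prop :=
  Tr s α t ∨ (α = none ∧ s = t)

/-- Branching bisimulation relation for an LTS. -/
def IsBB {S A : Type} (Tr : LTSRel S A) (R : S → S → Prop) : Prop :=
  (∀ s t, R s t → R t s) ∧
  ∀ s t α s', R s t → Tr s α s' →
    ∃ th t', TauStar Tr t th ∧ TransOpt Tr th α t' ∧ R s th ∧ R s' t'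

/-- A partition of the state space: pairwise disjoint nonempty blocks covering everything. -/
def IsPartition {S : Type} (Bl : Set (Set S)) : Prop :=
  (∀ B ∈ Bl, B.Nonempty) ∧ ⋃₀ Bl = Set.univ ∧
    ∀ B ∈ Bl, ∀ B' ∈ Bl, B ≠ B' → Disjoint B B'

/-- `C` refines `Bl`: every block of `C` is a subset of a block of `Bl`. -/
def Refines {S : Type} (C Bl : Set (Set S)) : Prop :=
  ∀ c ∈ C, ∃ B ∈ Bl, c ⊆ B

/-- `pos_α(B,B')`. -/
def posL {S A : Type} (Tr : LTSRel S A) (α : Option A) (B B' : Set S) : Set S :=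
  {s | s ∈ B ∧ ∃ sh ∈ B, ∃ s' ∈ B', TauStar Tr s sh ∧ Tr sh α s'}

/-- `neg_α(B,B')`. -/
def negL {S A : Type} (Tr : LTSRel S A) (α : Option A) (B B' : Set S) : Set S :=
  {s | s ∈ B ∧ ∀ sh ∈ B, ∀ s' ∈ B', ¬ TauStar Tr s sh ∨ ¬ Tr sh α s'}

/-- `B'` is a splitter of `B` for the action `α`. -/
def IsSplitterL {S A : Type} (Tr : LTSRel S A) (α : Option A) (B B' : Set S) : Prop :=
  (posL Tr α B B').Nonempty ∧ (negL Tr α B B').Nonempty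

/-- A stable partition: no block is a splitter of any block for any action. -/
def StablePartition {S A : Type} (Tr : LTSRel S A) (Bl : Set (Set S)) : Prop :=
  IsPartition Bl ∧ ∀ B ∈ Bl, ∀ B' ∈ Bl, ∀ α, ¬ IsSplitterL Tr α B B'

/-- Transition relation of the quotient LTS of a partition. -/
def quotTr {S A : Type} (Tr : LTSRel S A) (Bl : Set (Set S)) : LTSRel (↥Bl) A :=
  fun B α B' => (B ≠ B' ∨ α ≠ none) ∧ ∃ s ∈ B.1, ∃ s' ∈ B'.1, Tr s α s'

/-- Transition relation of the disjoint union of two LTS. -/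
def sumTr {S S' A : Type} (Tr : LTSRel S A) (Tr' : LTSRel S' A) : LTSRel (S ⊕ S') A :=
  fun x α y =>
    match x, y with
    | Sum.inl s, Sum.inl t => Tr s α t
    | Sum.inr s, Sum.inr t => Tr' s α t
    | _, _ => False

/-- The quotient LTS of the coarsest stable partition is branching
bisimilar to the original LTS: the initial state and the initial block are related
by a branching bisimulation relation on the disjoint union of the two systems. -/
theorem stmt0 {S A : Type} [Finite S] [Finite A] (Tr : LTSRel S A) (s0 : S)
    (Bmin : Set (Set S)) (hstable : StablePartition Tr Bmin)
    (hcoarsest : ∀ C : Set (Set S), StablePartition Tr C → Refines C Bmin)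
    (Bstar : Set S) (hBstar : Bstar ∈ Bmin) (hs0 : s0 ∈ Bstar) :
    ∃ R : (S ⊕ ↥Bmin) → (S ⊕ ↥Bmin) → Prop,
      IsBB (sumTr Tr (quotTr Tr Bmin)) R ∧
      R (Sum.inl s0) (Sum.inr ⟨Bstar, hBstar⟩) := by
  classical
  obtain ⟨⟨hne, hcov, hdisj⟩, hstab⟩ := hstable
  refine ⟨fun x y => x = y ∨ ∃ (s : S) (B : ↥Bmin), s ∈ B.1 ∧
      ((x = Sum.inl s ∧ y = Sum.inr B) ∨ (x = Sum.inr B ∧ y = Sum.inl s)), ⟨?_, ?_⟩,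
      Or.inr ⟨s0, ⟨Bstar, hBstar⟩, hs0, Or.inl ⟨rfl, rfl⟩⟩⟩
  · rintro x y (rfl | ⟨s, B, hs, (⟨rfl, rfl⟩ | ⟨rfl, rfl⟩)⟩)
    · exact Or.inl rfl
    · exact Or.inr ⟨s, B, hs, Or.inr ⟨rfl, rfl⟩⟩
    · exact Or.inr ⟨s, B, hs, Or.inl ⟨rfl, rfl⟩⟩
  · rintro x y α x' (rfl | ⟨s, B, hs, (⟨rfl, rfl⟩ | ⟨rfl, rfl⟩)⟩) htr
    · exact ⟨x, x', Relation.ReflTransGen.refl, Or.inl htr, Or.inl rfl, Or.inl rfl⟩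
    · -- x = inl s moves, y = inr B
      cases x' with
      | inr _ => exact htr.elim
      | inl s' =>
        have hs'U : s' ∈ ⋃₀ Bmin := by rw [hcov]; trivial
        obtain ⟨B', hB', hs'B'⟩ := hs'U
        by_cases hcase : (B : Set S) = B' ∧ α = none
        · refine ⟨Sum.inr B, Sum.inr B, Relation.ReflTransGen.refl,
            Or.inr ⟨hcase.2, rfl⟩, Or.inr ⟨s, B, hs, Or.inl ⟨rfl, rfl⟩⟩,
            Or.inr ⟨s', B, ?_, Or.inl ⟨rfl, rfl⟩⟩⟩
          rw [hcase.1]; exact hs'B'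
        · refine ⟨Sum.inr B, Sum.inr ⟨B', hB'⟩, Relation.ReflTransGen.refl,
            Or.inl ⟨?_, s, hs, s', hs'B', htr⟩,
            Or.inr ⟨s, B, hs, Or.inl ⟨rfl, rfl⟩⟩,
            Or.inr ⟨s', ⟨B', hB'⟩, hs'B', Or.inl ⟨rfl, rfl⟩⟩⟩
          by_cases hb : (B : Set S) = B'
          · exact Or.inr (fun hα => hcase ⟨hb, hα⟩)
          · exact Or.inl (fun h => hb (congrArg Subtype.val h))
    · -- x = inr B moves, y = inl s
      cases x' with
      | inl _ => exact htr.elim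
      | inr B' =>
        obtain ⟨hne', u, hu, u', hu', htuu⟩ := htr
        have hpos : (posL Tr α B.1 B'.1).Nonempty :=
          ⟨u, hu, u, hu, u', hu', Relation.ReflTransGen.refl, htuu⟩
        have hsneg : s ∉ negL Tr α B.1 B'.1 := fun hneg =>
          hstab B.1 B.2 B'.1 B'.2 α ⟨hpos, ⟨s, hneg⟩⟩
        have h2 : ¬ ∀ sh ∈ B.1, ∀ s' ∈ B'.1, ¬ TauStar Tr s sh ∨ ¬ Tr sh α s' :=
          fun h => hsneg ⟨hs, h⟩
        push_neg at h2
        obtain ⟨sh, hsh, s', hs'B', hts, htr'⟩ := h2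
        refine ⟨Sum.inl sh, Sum.inl s', ?_, Or.inl htr',
          Or.inr ⟨sh, B, hsh, Or.inr ⟨rfl, rfl⟩⟩,
          Or.inr ⟨s', B', hs'B', Or.inr ⟨rfl, rfl⟩⟩⟩
        exact Relation.ReflTransGen.lift (r := fun s t => Tr s none t) Sum.inl (fun a b h => h) _ _ hts
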